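/- Let c ∈ (F³)ˣ and a ∈ (F²)ˣ be units, and set c' = c·Δ¹(a) ∈ (F³)ˣ. Then for all x, y ∈ F²: (x·a⁻¹) ⋆_{c'} (y·a⁻¹) = (x ⋆_c y)·a⁻¹. Consequently, the map m ↦ m·a⁻¹ (multiplication in the commutative ring F²) is a k-algebra isomorphism from A(F,c) onto A(F,c'). -/

import Mathlib

open TensorProduct

universe u

variable (k F : Type u) [Field k] [CommRing F] [Algebra k F]

/-- `ε₀ : F ⊗ F → F ⊗ F ⊗ F`, `x ⊗ y ↦ 1 ⊗ x ⊗ y`. -/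
noncomputable def eps0 : F ⊗[k] F →ₐ[k] F ⊗[k] (F ⊗[k] F) :=
  Algebra.TensorProduct.includeRight

/-- `ε₁ : F ⊗ F → F ⊗ F ⊗ F`, `x ⊗ y ↦ x ⊗ 1 ⊗ y`. -/
noncomputable def eps1 : F ⊗[k] F →ₐ[k] F ⊗[k] (F ⊗[k] F) :=
  Algebra.TensorProduct.map (AlgHom.id k F) Algebra.TensorProduct.includeRight

/-- `ε₂ : F ⊗ F → F ⊗ F ⊗ F`, `x ⊗ y ↦ x ⊗ y ⊗ 1`. -/
noncomputable def eps2 : F ⊗[k] F →ₐ[k] F ⊗[k] (F ⊗[k] F) :=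
  Algebra.TensorProduct.map (AlgHom.id k F) Algebra.TensorProduct.includeLeft

/-- `F³` regarded as an `F²`-algebra via `ε₁`. -/
noncomputable instance : Algebra (F ⊗[k] F) (F ⊗[k] (F ⊗[k] F)) :=
  (eps1 k F).toRingHom.toAlgebra

/-- The trace of `F³` as an `F²`-algebra (via `ε₁`). -/
noncomputable def trF3 : F ⊗[k] (F ⊗[k] F) →ₗ[F ⊗[k] F] F ⊗[k] F :=
  Algebra.trace (F ⊗[k] F) (F ⊗[k] (F ⊗[k] F))

/-- The Brauer-factor-set multiplication `⋆_c` on `F²` attached to `c ∈ F³`,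
`x ⋆_c y = Tr(ε₂(x)·c·ε₀(y))`. The `k`-vector space `F²` with this multiplication
is the algebra `A(F,c)`. -/
noncomputable def starMul (c : F ⊗[k] (F ⊗[k] F)) (x y : F ⊗[k] F) : F ⊗[k] F :=
  trF3 k F (eps2 k F x * c * eps0 k F y)


/-- The Amitsur differential `Δ¹(α) = ε₀(α)·ε₁(α)⁻¹·ε₂(α)` on units of `F²`. -/
noncomputable def delta1 (a : (F ⊗[k] F)ˣ) : (F ⊗[k] (F ⊗[k] F))ˣ :=
  Units.map (eps0 k F).toRingHom.toMonoidHom a *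
    (Units.map (eps1 k F).toRingHom.toMonoidHom a)⁻¹ *
    Units.map (eps2 k F).toRingHom.toMonoidHom a

/-- Let `c ∈ (F³)ˣ`, `a ∈ (F²)ˣ` and `c' = c·Δ¹(a)`. Then
`(x·a⁻¹) ⋆_{c'} (y·a⁻¹) = (x ⋆_c y)·a⁻¹` for all `x, y ∈ F²`; consequently `m ↦ m·a⁻¹` is a
`k`-algebra isomorphism from `A(F,c)` onto `A(F,c')`. -/
theorem starMul_mul_inv_unit [FiniteDimensional k F] [Algebra.Etale k F]
    (c : (F ⊗[k] (F ⊗[k] F))ˣ) (a : (F ⊗[k] F)ˣ)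
    (c' : (F ⊗[k] (F ⊗[k] F))ˣ) (hc' : c' = c * delta1 k F a) :
    (∀ x y : F ⊗[k] F,
      starMul k F (c' : F ⊗[k] (F ⊗[k] F)) (x * ((a⁻¹ : (F ⊗[k] F)ˣ) : F ⊗[k] F))
          (y * ((a⁻¹ : (F ⊗[k] F)ˣ) : F ⊗[k] F)) =
        starMul k F (c : F ⊗[k] (F ⊗[k] F)) x y * ((a⁻¹ : (F ⊗[k] F)ˣ) : F ⊗[k] F)) ∧
    Function.Bijective (fun m : F ⊗[k] F => m * ((a⁻¹ : (F ⊗[k] F)ˣ) : F ⊗[k] F)) := by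
  constructor
  · intro x y
    subst hc'
    have hδ : ((delta1 k F a : (F ⊗[k] (F ⊗[k] F))ˣ) : F ⊗[k] (F ⊗[k] F)) =
        eps0 k F ((a : (F ⊗[k] F)ˣ) : F ⊗[k] F) *
          eps1 k F ((a⁻¹ : (F ⊗[k] F)ˣ) : F ⊗[k] F) *
          eps2 k F ((a : (F ⊗[k] F)ˣ) : F ⊗[k] F) := by
      simp [delta1, Units.coe_map_inv]
    have e0 : eps0 k F ((a⁻¹ : (F ⊗[k] F)ˣ) : F ⊗[k] F) *
        eps0 k F ((a : (F ⊗[k] F)ˣ) : F ⊗[k] F) = 1 := by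
      rw [← map_mul, Units.inv_mul, map_one]
    have e2 : eps2 k F ((a⁻¹ : (F ⊗[k] F)ˣ) : F ⊗[k] F) *
        eps2 k F ((a : (F ⊗[k] F)ˣ) : F ⊗[k] F) = 1 := by
      rw [← map_mul, Units.inv_mul, map_one]
    have hmain : eps2 k F (x * ((a⁻¹ : (F ⊗[k] F)ˣ) : F ⊗[k] F)) *
          ((c : F ⊗[k] (F ⊗[k] F)) * ((delta1 k F a : (F ⊗[k] (F ⊗[k] F))ˣ) : F ⊗[k] (F ⊗[k] F))) *
          eps0 k F (y * ((a⁻¹ : (F ⊗[k] F)ˣ) : F ⊗[k] F)) =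
        eps1 k F ((a⁻¹ : (F ⊗[k] F)ˣ) : F ⊗[k] F) *
          (eps2 k F x * (c : F ⊗[k] (F ⊗[k] F)) * eps0 k F y) := by
      rw [map_mul (eps2 k F), map_mul (eps0 k F), hδ]
      set t := eps1 k F ((a⁻¹ : (F ⊗[k] F)ˣ) : F ⊗[k] F) *
        (eps2 k F x * (c : F ⊗[k] (F ⊗[k] F)) * eps0 k F y) with ht
      linear_combination (t * eps0 k F ((a : (F ⊗[k] F)ˣ) : F ⊗[k] F) *
        eps0 k F ((a⁻¹ : (F ⊗[k] F)ˣ) : F ⊗[k] F)) * e2 + t * e0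
    have hsmul : eps1 k F ((a⁻¹ : (F ⊗[k] F)ˣ) : F ⊗[k] F) *
          (eps2 k F x * (c : F ⊗[k] (F ⊗[k] F)) * eps0 k F y) =
        ((a⁻¹ : (F ⊗[k] F)ˣ) : F ⊗[k] F) •
          (eps2 k F x * (c : F ⊗[k] (F ⊗[k] F)) * eps0 k F y) := by
      rw [Algebra.smul_def]; rfl
    show trF3 k F _ = _
    rw [Units.val_mul, hmain, hsmul, map_smul, smul_eq_mul, mul_comm]
    rfl
  · exact (Units.mulRight (a⁻¹)).bijective
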